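/- Let a, x, b ∈ ℝ with b ≠ 0 and (a−x)·b < 0, and let f_{τ₁}(t) = (|a−x|/t^{3/2}) φ((a + bt − x)/√t) for t > 0. Then ∫₀^∞ (2Φ(|b|√s) − 1) · f_{τ₁}(s) ds ≤ 2Φ(√(|b(a−x)|)) − 1. (This is the Jensen-inequality bound P(T₂(x) = +∞) ≤ γ(b) of the paper, where γ(b) = 2·sgn(b)·(Φ(b√(|(a−x)/b|)) − 1/2).) -/

import Mathlib

open Real MeasureTheory Set Filter

/-- Standard Gaussian density φ(z) = (1/√(2π)) e^{−z²/2}. -/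
noncomputable def gaussPdf (z : ℝ) : ℝ := (1 / Real.sqrt (2 * π)) * Real.exp (-z ^ 2 / 2)

/-- Standard Gaussian distribution function Φ(y) = ∫_{−∞}^y φ(z) dz. -/
noncomputable def gaussCdf (y : ℝ) : ℝ := ∫ z in Set.Iio y, gaussPdf z

/-- ψ_t(u) = (e^{−b²u/2}/(π√(u(t−u)))) · [ e^{−b²(t−u)/2}
      + (b/2)·√(2π(t−u)) · (2Φ(b√(t−u)) − 1) ]. -/
noncomputable def psi (b t u : ℝ) : ℝ :=
  (Real.exp (-b ^ 2 * u / 2) / (π * Real.sqrt (u * (t - u)))) *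
    (Real.exp (-b ^ 2 * (t - u) / 2) +
      (b / 2) * Real.sqrt (2 * π * (t - u)) *
        (2 * gaussCdf (b * Real.sqrt (t - u)) - 1))

/-- Inverse Gaussian first-passage density f_{τ₁}(t) = (|a−x|/t^{3/2}) φ((a+bt−x)/√t). -/
noncomputable def invGaussPdf (a x b t : ℝ) : ℝ :=
  (|a - x| / t ^ ((3 : ℝ) / 2)) * gaussPdf ((a + b * t - x) / Real.sqrt t)

open Topology

lemma gaussPdf_nonneg (z : ℝ) : 0 ≤ gaussPdf z := by
  apply mul_nonneg (by positivity) (Real.exp_nonneg _)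

lemma continuous_gaussPdf : Continuous gaussPdf := by
  unfold gaussPdf; fun_prop

lemma integrable_gaussPdf : Integrable gaussPdf := by
  have h : Integrable (fun x : ℝ => Real.exp (-(1/2 : ℝ) * x ^ 2)) :=
    integrable_exp_neg_mul_sq (by norm_num)
  have := h.const_mul (1 / Real.sqrt (2 * π))
  refine this.congr (Eventually.of_forall fun x => ?_)
  unfold gaussPdf; ring_nf

lemma integral_gaussPdf : ∫ z, gaussPdf z = 1 := by
  unfold gaussPdf
  rw [MeasureTheory.integral_const_mul]
  have : ∀ z : ℝ, Real.exp (-z ^ 2 / 2) = Real.exp (-(1/2 : ℝ) * z ^ 2) := by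
    intro z; ring_nf
  simp_rw [this, integral_gaussian]
  rw [show (π / (1/2 : ℝ)) = 2 * π by ring]
  rw [one_div, inv_mul_cancel₀]
  positivity

lemma gaussPdf_sq_eq {p q : ℝ} (h : p ^ 2 = q ^ 2) : gaussPdf p = gaussPdf q := by
  unfold gaussPdf; rw [h]

lemma gaussCdf_eq (y : ℝ) :
    gaussCdf y = (∫ z in Iic (0:ℝ), gaussPdf z) + ∫ z in (0:ℝ)..y, gaussPdf z := by
  have h := intervalIntegral.integral_Iic_sub_Iic (μ := (volume : Measure ℝ))
    (f := gaussPdf) (a := (0:ℝ)) (b := y)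
    integrable_gaussPdf.integrableOn integrable_gaussPdf.integrableOn
  have h2 : gaussCdf y = ∫ z in Iic y, gaussPdf z := (integral_Iic_eq_integral_Iio).symm
  rw [h2, ← h]; ring

lemma hasDerivAt_gaussCdf (y : ℝ) : HasDerivAt gaussCdf (gaussPdf y) y := by
  have h : HasDerivAt (fun u => ∫ z in (0:ℝ)..u, gaussPdf z) (gaussPdf y) y :=
    intervalIntegral.integral_hasDerivAt_right
      (integrable_gaussPdf.intervalIntegrable)
      (continuous_gaussPdf.stronglyMeasurable.stronglyMeasurableAtFilter)
      continuous_gaussPdf.continuousAt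
  have h2 := (hasDerivAt_const y (∫ z in Iic (0:ℝ), gaussPdf z)).add h
  simpa using h2.congr_of_eventuallyEq (Eventually.of_forall fun u => (gaussCdf_eq u))

lemma continuous_gaussCdf : Continuous gaussCdf :=
  continuous_iff_continuousAt.2 fun y => (hasDerivAt_gaussCdf y).continuousAt

lemma gaussCdf_nonneg (y : ℝ) : 0 ≤ gaussCdf y :=
  setIntegral_nonneg measurableSet_Iio fun z _ => gaussPdf_nonneg z

lemma gaussCdf_le_one (y : ℝ) : gaussCdf y ≤ 1 := by
  rw [← integral_gaussPdf]
  exact setIntegral_le_integral integrable_gaussPdf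
    (Eventually.of_forall fun z => gaussPdf_nonneg z)

lemma tendsto_gaussCdf_atTop : Tendsto gaussCdf atTop (𝓝 1) := by
  have hcov : AECover (volume : Measure ℝ) atTop (fun y : ℝ => Iio y) :=
    aecover_Iio tendsto_id
  have h := hcov.integral_tendsto_of_countably_generated integrable_gaussPdf
  rw [integral_gaussPdf] at h
  exact h

lemma tendsto_gaussCdf_atBot : Tendsto gaussCdf atBot (𝓝 0) := by
  have hcov : AECover (volume : Measure ℝ) atBot (fun y : ℝ => Ici y) :=
    aecover_Ici tendsto_id
  have h := hcov.integral_tendsto_of_countably_generated integrable_gaussPdf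
  rw [integral_gaussPdf] at h
  have heq : ∀ y : ℝ, gaussCdf y = 1 - ∫ z in Ici y, gaussPdf z := by
    intro y
    have h3 := intervalIntegral.integral_Iio_add_Ici (b := y) (μ := (volume : Measure ℝ))
      integrable_gaussPdf.integrableOn integrable_gaussPdf.integrableOn
    rw [integral_gaussPdf] at h3
    rw [gaussCdf, ← h3]; ring
  have h4 : Tendsto (fun y : ℝ => 1 - ∫ z in Ici y, gaussPdf z) atBot (𝓝 0) := by
    simpa using ((tendsto_const_nhds (x := (1:ℝ)) (f := atBot)).sub h)
  exact h4.congr fun y => (heq y).symm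

noncomputable def ig_u (β c t : ℝ) : ℝ := β * Real.sqrt t - c / Real.sqrt t
noncomputable def ig_v (β c t : ℝ) : ℝ := β * Real.sqrt t + c / Real.sqrt t
noncomputable def ig_f (β c t : ℝ) : ℝ := (c / (t * Real.sqrt t)) * gaussPdf (ig_u β c t)
noncomputable def ig_F (β c t : ℝ) : ℝ :=
  if t ≤ 0 then 0 else gaussCdf (ig_u β c t) + Real.exp (2 * (β * c)) * gaussCdf (-(ig_v β c t))
noncomputable def ig_H (β c t : ℝ) : ℝ :=
  if t ≤ 0 then 0
  else (c / β) * (gaussCdf (ig_u β c t) - Real.exp (2 * (β * c)) * gaussCdf (-(ig_v β c t)))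

lemma hasDerivAt_ig_u (β c : ℝ) {t : ℝ} (ht : 0 < t) :
    HasDerivAt (ig_u β c) ((β * t + c) / (2 * t * Real.sqrt t)) t := by
  have hst : (0:ℝ) < Real.sqrt t := Real.sqrt_pos.2 ht
  have h1 : HasDerivAt Real.sqrt (1 / (2 * Real.sqrt t)) t := Real.hasDerivAt_sqrt ht.ne'
  have h2 := (h1.const_mul β).sub ((hasDerivAt_const t c).div h1 hst.ne')
  refine h2.congr_deriv ?_
  have hsq : Real.sqrt t ^ 2 = t := Real.sq_sqrt ht.le
  rw [← hsq]
  field_simp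
  rw [Real.sqrt_sq hst.le]
  ring

lemma hasDerivAt_ig_v (β c : ℝ) {t : ℝ} (ht : 0 < t) :
    HasDerivAt (ig_v β c) ((β * t - c) / (2 * t * Real.sqrt t)) t := by
  have hst : (0:ℝ) < Real.sqrt t := Real.sqrt_pos.2 ht
  have h1 : HasDerivAt Real.sqrt (1 / (2 * Real.sqrt t)) t := Real.hasDerivAt_sqrt ht.ne'
  have h2 := (h1.const_mul β).add ((hasDerivAt_const t c).div h1 hst.ne')
  refine h2.congr_deriv ?_
  have hsq : Real.sqrt t ^ 2 = t := Real.sq_sqrt ht.le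
  rw [← hsq]
  field_simp
  rw [Real.sqrt_sq hst.le]
  ring

lemma exp_gaussPdf_ig_v (β c : ℝ) {t : ℝ} (ht : 0 < t) :
    Real.exp (2 * (β * c)) * gaussPdf (ig_v β c t) = gaussPdf (ig_u β c t) := by
  have hst : (0:ℝ) < Real.sqrt t := Real.sqrt_pos.2 ht
  have key : Real.sqrt t * (c / Real.sqrt t) = c := by field_simp
  have hvu : ig_v β c t ^ 2 = ig_u β c t ^ 2 + 4 * (β * c) := by
    unfold ig_u ig_v
    linear_combination (4 * β) * key
  unfold gaussPdf
  rw [hvu, mul_left_comm, ← Real.exp_add]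
  congr 1
  ring

lemma ig_f_eq (β c : ℝ) {t : ℝ} (ht : 0 < t) :
    ig_f β c t = gaussPdf (ig_u β c t) * ((β * t + c) / (2 * t * Real.sqrt t)) +
      Real.exp (2 * (β * c)) *
        (gaussPdf (-(ig_v β c t)) * -((β * t - c) / (2 * t * Real.sqrt t))) := by
  have hst : (0:ℝ) < Real.sqrt t := Real.sqrt_pos.2 ht
  have h1 : gaussPdf (-(ig_v β c t)) = gaussPdf (ig_v β c t) :=
    gaussPdf_sq_eq (by ring)
  rw [h1]
  have h2 : Real.exp (2 * (β * c)) * (gaussPdf (ig_v β c t) * -((β * t - c) / (2 * t * Real.sqrt t)))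
      = gaussPdf (ig_u β c t) * -((β * t - c) / (2 * t * Real.sqrt t)) := by
    rw [← mul_assoc, exp_gaussPdf_ig_v β c ht]
  rw [h2]
  unfold ig_f
  field_simp
  ring

lemma hasDerivAt_ig_F (β c : ℝ) {t : ℝ} (ht : 0 < t) :
    HasDerivAt (ig_F β c) (ig_f β c t) t := by
  have hU := (hasDerivAt_gaussCdf (ig_u β c t)).comp t (hasDerivAt_ig_u β c ht)
  have hV := (hasDerivAt_gaussCdf (-(ig_v β c t))).comp t (hasDerivAt_ig_v β c ht).neg
  have hG := hU.add (hV.const_mul (Real.exp (2 * (β * c))))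
  have heq : (fun s => gaussCdf (ig_u β c s) + Real.exp (2 * (β * c)) * gaussCdf (-(ig_v β c s)))
      =ᶠ[𝓝 t] ig_F β c := by
    filter_upwards [Ioi_mem_nhds ht] with s hs
    simp [ig_F, not_le.2 (mem_Ioi.1 hs)]
  have hG2 := hG.congr_of_eventuallyEq heq.symm
  rw [ig_f_eq β c ht]
  exact hG2

lemma hasDerivAt_ig_H (β c : ℝ) (hβ : 0 < β) {t : ℝ} (ht : 0 < t) :
    HasDerivAt (ig_H β c) (t * ig_f β c t) t := by
  have hst : (0:ℝ) < Real.sqrt t := Real.sqrt_pos.2 ht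
  have hU := (hasDerivAt_gaussCdf (ig_u β c t)).comp t (hasDerivAt_ig_u β c ht)
  have hV := (hasDerivAt_gaussCdf (-(ig_v β c t))).comp t (hasDerivAt_ig_v β c ht).neg
  have hG := ((hU.sub (hV.const_mul (Real.exp (2 * (β * c))))).const_mul (c / β))
  have heq : (fun s => (c / β) * (gaussCdf (ig_u β c s) -
      Real.exp (2 * (β * c)) * gaussCdf (-(ig_v β c s)))) =ᶠ[𝓝 t] ig_H β c := by
    filter_upwards [Ioi_mem_nhds ht] with s hs
    simp [ig_H, not_le.2 (mem_Ioi.1 hs)]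
  have hG2 := hG.congr_of_eventuallyEq heq.symm
  refine hG2.congr_deriv ?_
  have h1 : gaussPdf (-(ig_v β c t)) = gaussPdf (ig_v β c t) := gaussPdf_sq_eq (by ring)
  rw [h1]
  have h2 : Real.exp (2 * (β * c)) * (gaussPdf (ig_v β c t) * -((β * t - c) / (2 * t * Real.sqrt t)))
      = gaussPdf (ig_u β c t) * -((β * t - c) / (2 * t * Real.sqrt t)) := by
    rw [← mul_assoc, exp_gaussPdf_ig_v β c ht]
  rw [h2]
  unfold ig_f
  field_simp
  ring

lemma tendsto_sqrt_atTop' : Tendsto Real.sqrt atTop atTop := by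
  have h := tendsto_rpow_atTop (y := (1/2 : ℝ)) (by norm_num)
  refine Tendsto.congr' ?_ h
  filter_upwards [eventually_ge_atTop (0:ℝ)] with x hx
  exact (Real.sqrt_eq_rpow x).symm

lemma tendsto_ig_u_atTop (β c : ℝ) (hβ : 0 < β) (hc : 0 < c) :
    Tendsto (ig_u β c) atTop atTop := by
  have h1 : Tendsto (fun t => β * Real.sqrt t) atTop atTop :=
    tendsto_sqrt_atTop'.const_mul_atTop hβ
  have h2 : Tendsto (fun t => β * Real.sqrt t + -(c / Real.sqrt t)) atTop atTop := by
    apply tendsto_atTop_add_right_of_le' atTop (-c) h1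
    filter_upwards [eventually_ge_atTop (1:ℝ)] with t ht
    have hst : (1:ℝ) ≤ Real.sqrt t := by
      rw [show (1:ℝ) = Real.sqrt 1 by simp]
      exact Real.sqrt_le_sqrt ht
    have : c / Real.sqrt t ≤ c := by
      apply div_le_self hc.le hst
    linarith
  exact h2.congr fun t => by unfold ig_u; ring

lemma tendsto_ig_v_atTop (β c : ℝ) (hβ : 0 < β) (hc : 0 < c) :
    Tendsto (ig_v β c) atTop atTop := by
  have h1 : Tendsto (fun t => β * Real.sqrt t) atTop atTop :=
    tendsto_sqrt_atTop'.const_mul_atTop hβ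
  apply tendsto_atTop_add_right_of_le' atTop 0 h1
  filter_upwards [eventually_ge_atTop (0:ℝ)] with t ht
  positivity

lemma tendsto_sqrt_zero_within : Tendsto Real.sqrt (𝓝[>] (0:ℝ)) (𝓝[>] (0:ℝ)) := by
  apply tendsto_nhdsWithin_of_tendsto_nhds_of_eventually_within
  · have := (Real.continuous_sqrt.tendsto (0:ℝ))
    rw [Real.sqrt_zero] at this
    exact this.mono_left nhdsWithin_le_nhds
  · filter_upwards [self_mem_nhdsWithin] with t ht
    exact Real.sqrt_pos.2 ht

lemma tendsto_const_div_sqrt_zero (c : ℝ) (hc : 0 < c) :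
    Tendsto (fun t => c / Real.sqrt t) (𝓝[>] (0:ℝ)) atTop := by
  have h := tendsto_inv_nhdsGT_zero.comp tendsto_sqrt_zero_within
  have h2 := h.const_mul_atTop hc
  exact h2.congr fun t => by simp [Function.comp, div_eq_mul_inv]


lemma tendsto_ig_u_zero (β c : ℝ) (hβ : 0 < β) (hc : 0 < c) :
    Tendsto (ig_u β c) (𝓝[>] (0:ℝ)) atBot := by
  have h2 : Tendsto (fun t => -(c / Real.sqrt t)) (𝓝[>] (0:ℝ)) atBot :=
    tendsto_neg_atTop_atBot.comp (tendsto_const_div_sqrt_zero c hc)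
  have h3 : Tendsto (fun t => β * Real.sqrt t + -(c / Real.sqrt t)) (𝓝[>] (0:ℝ)) atBot := by
    apply tendsto_atBot_add_left_of_ge' (𝓝[>] (0:ℝ)) β ?_ h2
    have hmem : Ioo (0:ℝ) 1 ∈ 𝓝[>] (0:ℝ) := Ioo_mem_nhdsGT (by norm_num)
    filter_upwards [hmem] with t ht
    have h4 : Real.sqrt t ≤ 1 := by
      rw [show (1:ℝ) = Real.sqrt 1 by simp]
      exact Real.sqrt_le_sqrt ht.2.le
    nlinarith
  exact h3.congr fun t => by unfold ig_u; ring

lemma tendsto_ig_v_zero (β c : ℝ) (hβ : 0 < β) (hc : 0 < c) :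
    Tendsto (ig_v β c) (𝓝[>] (0:ℝ)) atTop := by
  apply tendsto_atTop_add_left_of_le' (𝓝[>] (0:ℝ)) 0 ?_ (tendsto_const_div_sqrt_zero c hc)
  filter_upwards [self_mem_nhdsWithin] with t ht
  positivity

lemma tendsto_ig_F_atTop (β c : ℝ) (hβ : 0 < β) (hc : 0 < c) :
    Tendsto (ig_F β c) atTop (𝓝 1) := by
  have h1 : Tendsto (fun t => gaussCdf (ig_u β c t)) atTop (𝓝 1) :=
    tendsto_gaussCdf_atTop.comp (tendsto_ig_u_atTop β c hβ hc)
  have h2 : Tendsto (fun t => gaussCdf (-(ig_v β c t))) atTop (𝓝 0) :=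
    tendsto_gaussCdf_atBot.comp (tendsto_neg_atTop_atBot.comp (tendsto_ig_v_atTop β c hβ hc))
  have h3 := h1.add (h2.const_mul (Real.exp (2 * (β * c))))
  rw [mul_zero, add_zero] at h3
  refine h3.congr' ?_
  filter_upwards [eventually_gt_atTop (0:ℝ)] with t ht
  simp [ig_F, not_le.2 ht]

lemma tendsto_ig_H_atTop (β c : ℝ) (hβ : 0 < β) (hc : 0 < c) :
    Tendsto (ig_H β c) atTop (𝓝 (c / β)) := by
  have h1 : Tendsto (fun t => gaussCdf (ig_u β c t)) atTop (𝓝 1) :=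
    tendsto_gaussCdf_atTop.comp (tendsto_ig_u_atTop β c hβ hc)
  have h2 : Tendsto (fun t => gaussCdf (-(ig_v β c t))) atTop (𝓝 0) :=
    tendsto_gaussCdf_atBot.comp (tendsto_neg_atTop_atBot.comp (tendsto_ig_v_atTop β c hβ hc))
  have h3 := (h1.sub (h2.const_mul (Real.exp (2 * (β * c))))).const_mul (c / β)
  rw [mul_zero, sub_zero, mul_one] at h3
  refine h3.congr' ?_
  filter_upwards [eventually_gt_atTop (0:ℝ)] with t ht
  simp [ig_H, not_le.2 ht]

lemma tendsto_ig_F_zero (β c : ℝ) (hβ : 0 < β) (hc : 0 < c) :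
    Tendsto (ig_F β c) (𝓝[>] (0:ℝ)) (𝓝 0) := by
  have h1 : Tendsto (fun t => gaussCdf (ig_u β c t)) (𝓝[>] (0:ℝ)) (𝓝 0) :=
    tendsto_gaussCdf_atBot.comp (tendsto_ig_u_zero β c hβ hc)
  have h2 : Tendsto (fun t => gaussCdf (-(ig_v β c t))) (𝓝[>] (0:ℝ)) (𝓝 0) :=
    tendsto_gaussCdf_atBot.comp (tendsto_neg_atTop_atBot.comp (tendsto_ig_v_zero β c hβ hc))
  have h3 := h1.add (h2.const_mul (Real.exp (2 * (β * c))))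
  rw [mul_zero, add_zero] at h3
  refine h3.congr' ?_
  filter_upwards [self_mem_nhdsWithin] with t ht
  simp [ig_F, not_le.2 (mem_Ioi.1 ht)]

lemma tendsto_ig_H_zero (β c : ℝ) (hβ : 0 < β) (hc : 0 < c) :
    Tendsto (ig_H β c) (𝓝[>] (0:ℝ)) (𝓝 0) := by
  have h1 : Tendsto (fun t => gaussCdf (ig_u β c t)) (𝓝[>] (0:ℝ)) (𝓝 0) :=
    tendsto_gaussCdf_atBot.comp (tendsto_ig_u_zero β c hβ hc)
  have h2 : Tendsto (fun t => gaussCdf (-(ig_v β c t))) (𝓝[>] (0:ℝ)) (𝓝 0) :=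
    tendsto_gaussCdf_atBot.comp (tendsto_neg_atTop_atBot.comp (tendsto_ig_v_zero β c hβ hc))
  have h3 := (h1.sub (h2.const_mul (Real.exp (2 * (β * c))))).const_mul (c / β)
  rw [mul_zero, sub_zero, mul_zero] at h3
  refine h3.congr' ?_
  filter_upwards [self_mem_nhdsWithin] with t ht
  simp [ig_H, not_le.2 (mem_Ioi.1 ht)]

lemma contWithin_of_tendsto_zero {G : ℝ → ℝ} (hG0 : G 0 = 0)
    (h : Tendsto G (𝓝[>] (0:ℝ)) (𝓝 0)) : ContinuousWithinAt G (Ici (0:ℝ)) 0 := by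
  rw [ContinuousWithinAt, hG0]
  have hins : Ici (0:ℝ) = insert 0 (Ioi 0) := by
    ext y; simp [le_iff_lt_or_eq, or_comm, eq_comm]
  rw [hins, nhdsWithin_insert]
  rw [tendsto_sup]
  exact ⟨by simpa [hG0] using tendsto_pure_nhds G 0, h⟩

lemma ig_f_nonneg (β c : ℝ) (hc : 0 ≤ c) {t : ℝ} (ht : 0 < t) : 0 ≤ ig_f β c t := by
  unfold ig_f
  have := gaussPdf_nonneg (ig_u β c t)
  have hst : (0:ℝ) < Real.sqrt t := Real.sqrt_pos.2 ht
  positivity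

lemma ig_f_integral (β c : ℝ) (hβ : 0 < β) (hc : 0 < c) :
    IntegrableOn (ig_f β c) (Ioi 0) ∧ ∫ t in Ioi (0:ℝ), ig_f β c t = 1 := by
  have hcont : ContinuousWithinAt (ig_F β c) (Ici (0:ℝ)) 0 :=
    contWithin_of_tendsto_zero (by simp [ig_F]) (tendsto_ig_F_zero β c hβ hc)
  have hderiv : ∀ t ∈ Ioi (0:ℝ), HasDerivAt (ig_F β c) (ig_f β c t) t :=
    fun t ht => hasDerivAt_ig_F β c (mem_Ioi.1 ht)
  have hpos : ∀ t ∈ Ioi (0:ℝ), 0 ≤ ig_f β c t :=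
    fun t ht => ig_f_nonneg β c hc.le (mem_Ioi.1 ht)
  have htop := tendsto_ig_F_atTop β c hβ hc
  constructor
  · exact integrableOn_Ioi_deriv_of_nonneg hcont hderiv hpos htop
  · have := integral_Ioi_of_hasDerivAt_of_nonneg hcont hderiv hpos htop
    simpa [ig_F] using this

lemma ig_tf_integral (β c : ℝ) (hβ : 0 < β) (hc : 0 < c) :
    IntegrableOn (fun t => t * ig_f β c t) (Ioi 0) ∧
      ∫ t in Ioi (0:ℝ), t * ig_f β c t = c / β := by
  have hcont : ContinuousWithinAt (ig_H β c) (Ici (0:ℝ)) 0 :=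
    contWithin_of_tendsto_zero (by simp [ig_H]) (tendsto_ig_H_zero β c hβ hc)
  have hderiv : ∀ t ∈ Ioi (0:ℝ), HasDerivAt (ig_H β c) (t * ig_f β c t) t :=
    fun t ht => hasDerivAt_ig_H β c hβ (mem_Ioi.1 ht)
  have hpos : ∀ t ∈ Ioi (0:ℝ), 0 ≤ t * ig_f β c t :=
    fun t ht => mul_nonneg (le_of_lt (mem_Ioi.1 ht)) (ig_f_nonneg β c hc.le (mem_Ioi.1 ht))
  have htop := tendsto_ig_H_atTop β c hβ hc
  constructor
  · exact integrableOn_Ioi_deriv_of_nonneg hcont hderiv hpos htop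
  · have := integral_Ioi_of_hasDerivAt_of_nonneg hcont hderiv hpos htop
    simpa [ig_H] using this

noncomputable def gfun (β r : ℝ) : ℝ := 2 * gaussCdf (β * Real.sqrt r) - 1
noncomputable def Dfun (β r : ℝ) : ℝ := β * gaussPdf (β * Real.sqrt r) / Real.sqrt r

lemma hasDerivAt_gfun (β : ℝ) {r : ℝ} (hr : 0 < r) :
    HasDerivAt (gfun β) (Dfun β r) r := by
  have hst : (0:ℝ) < Real.sqrt r := Real.sqrt_pos.2 hr
  have h1 : HasDerivAt (fun x => β * Real.sqrt x) (β * (1 / (2 * Real.sqrt r))) r :=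
    (Real.hasDerivAt_sqrt hr.ne').const_mul β
  have h2 := (hasDerivAt_gaussCdf (β * Real.sqrt r)).comp r h1
  have h3 := (h2.const_mul (2:ℝ)).sub_const 1
  refine h3.congr_deriv ?_
  unfold Dfun
  field_simp

lemma Dfun_anti (β : ℝ) (hβ : 0 < β) {r₁ r₂ : ℝ} (h1 : 0 < r₁) (h12 : r₁ ≤ r₂) :
    Dfun β r₂ ≤ Dfun β r₁ := by
  have h2 : (0:ℝ) < r₂ := lt_of_lt_of_le h1 h12
  have hs1 : (0:ℝ) < Real.sqrt r₁ := Real.sqrt_pos.2 h1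
  have hs2 : (0:ℝ) < Real.sqrt r₂ := Real.sqrt_pos.2 h2
  have hφ : gaussPdf (β * Real.sqrt r₂) ≤ gaussPdf (β * Real.sqrt r₁) := by
    unfold gaussPdf
    apply mul_le_mul_of_nonneg_left _ (by positivity)
    apply Real.exp_le_exp.2
    have e1 : (β * Real.sqrt r₁) ^ 2 = β ^ 2 * r₁ := by
      rw [mul_pow, Real.sq_sqrt h1.le]
    have e2 : (β * Real.sqrt r₂) ^ 2 = β ^ 2 * r₂ := by
      rw [mul_pow, Real.sq_sqrt h2.le]
    rw [e1, e2]
    nlinarith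
  unfold Dfun
  apply div_le_div₀ (mul_nonneg hβ.le (gaussPdf_nonneg _))
    (mul_le_mul_of_nonneg_left hφ hβ.le) hs1 (Real.sqrt_le_sqrt h12)

lemma tangent_line (β : ℝ) (hβ : 0 < β) {m s : ℝ} (hm : 0 < m) (hs : 0 < s) :
    gfun β s ≤ gfun β m + Dfun β m * (s - m) := by
  rcases lt_trichotomy s m with h | h | h
  · obtain ⟨ξ, hξ, heq⟩ := exists_hasDerivAt_eq_slope (gfun β) (Dfun β) h
      (fun r hr => (hasDerivAt_gfun β (lt_of_lt_of_le hs hr.1)).continuousAt.continuousWithinAt)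
      (fun r hr => hasDerivAt_gfun β (lt_trans hs hr.1))
    have hmd : Dfun β m ≤ Dfun β ξ := Dfun_anti β hβ (lt_trans hs hξ.1) hξ.2.le
    have hms : (0:ℝ) < m - s := by linarith
    have heq2 : gfun β m - gfun β s = Dfun β ξ * (m - s) := by
      field_simp at heq
      linarith [heq]
    nlinarith [mul_le_mul_of_nonneg_right hmd hms.le]
  · subst h; simp
  · obtain ⟨ξ, hξ, heq⟩ := exists_hasDerivAt_eq_slope (gfun β) (Dfun β) h
      (fun r hr => (hasDerivAt_gfun β (lt_of_lt_of_le hm hr.1)).continuousAt.continuousWithinAt)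
      (fun r hr => hasDerivAt_gfun β (lt_trans hm hr.1))
    have hmd : Dfun β ξ ≤ Dfun β m := Dfun_anti β hβ hm hξ.1.le
    have hms : (0:ℝ) < s - m := by linarith
    have heq2 : gfun β s - gfun β m = Dfun β ξ * (s - m) := by
      field_simp at heq
      linarith [heq]
    nlinarith [mul_le_mul_of_nonneg_right hmd hms.le]

lemma invGaussPdf_eq_ig_f (a x b : ℝ) (hb : b ≠ 0) (h : (a - x) * b < 0) {s : ℝ} (hs : 0 < s) :
    invGaussPdf a x b s = ig_f (|b|) (|a - x|) s := by
  have hss : Real.sqrt s ^ 2 = s := Real.sq_sqrt hs.le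
  have hsne : Real.sqrt s ≠ 0 := (Real.sqrt_pos.2 hs).ne'
  have h_rpow : s ^ ((3:ℝ)/2) = s * Real.sqrt s := by
    rw [show (3:ℝ)/2 = 1 + 1/2 by norm_num, Real.rpow_add hs, Real.rpow_one,
      ← Real.sqrt_eq_rpow]
  have habneg : (a - x) * b = -(|b| * |a - x|) := by
    have h1 : |(a - x) * b| = -((a - x) * b) := abs_of_neg h
    rw [abs_mul] at h1
    linarith [h1]
  have hc2 : (a - x) ^ 2 = |a - x| ^ 2 := (sq_abs _).symm
  have hb2 : b ^ 2 = |b| ^ 2 := (sq_abs _).symm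
  have hu : ig_u (|b|) (|a - x|) s = (|b| * s - |a - x|) / Real.sqrt s := by
    unfold ig_u
    field_simp
    linear_combination |b| * hss
  have hkey : ((a + b * s - x) / Real.sqrt s) ^ 2 = (ig_u (|b|) (|a - x|) s) ^ 2 := by
    rw [hu, div_pow, div_pow, hss]
    congr 1
    linear_combination (2 * s) * habneg + hc2 + s ^ 2 * hb2
  unfold invGaussPdf ig_f
  rw [h_rpow, gaussPdf_sq_eq hkey]

lemma continuous_gfun (β : ℝ) : Continuous (gfun β) := by
  unfold gfun
  exact ((continuous_const.mul (continuous_gaussCdf.comp (continuous_const.mul Real.continuous_sqrt)))).sub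
    continuous_const

lemma continuousOn_ig_f (β c : ℝ) : ContinuousOn (ig_f β c) (Ioi 0) := by
  unfold ig_f
  apply ContinuousOn.mul
  · apply ContinuousOn.div continuousOn_const
      (continuous_id.mul Real.continuous_sqrt).continuousOn
    intro t ht
    have : (0:ℝ) < Real.sqrt t := Real.sqrt_pos.2 (mem_Ioi.1 ht)
    have h2 := mem_Ioi.1 ht
    show t * Real.sqrt t ≠ 0
    positivity
  · apply continuous_gaussPdf.comp_continuousOn
    unfold ig_u
    apply ContinuousOn.sub ((continuous_const.mul Real.continuous_sqrt : Continuous fun t : ℝ => β * Real.sqrt t)).continuousOn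
    apply ContinuousOn.div continuousOn_const Real.continuous_sqrt.continuousOn
    intro t ht
    exact (Real.sqrt_pos.2 (mem_Ioi.1 ht)).ne'

lemma abs_gfun_le_one (β s : ℝ) : |gfun β s| ≤ 1 := by
  unfold gfun
  rw [abs_le]
  constructor
  · linarith [gaussCdf_nonneg (β * Real.sqrt s)]
  · linarith [gaussCdf_le_one (β * Real.sqrt s)]

theorem main_ineq (β c : ℝ) (hβ : 0 < β) (hc : 0 < c) :
    ∫ s in Ioi (0:ℝ), gfun β s * ig_f β c s ≤ gfun β (c / β) := by
  set m : ℝ := c / β with hm_def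
  have hm : 0 < m := div_pos hc hβ
  obtain ⟨hf_int, hf_val⟩ := ig_f_integral β c hβ hc
  obtain ⟨htf_int, htf_val⟩ := ig_tf_integral β c hβ hc
  -- integrability of LHS
  have hmeas : AEStronglyMeasurable (fun s => gfun β s * ig_f β c s)
      (volume.restrict (Ioi 0)) :=
    (((continuous_gfun β).continuousOn.mul (continuousOn_ig_f β c)).aestronglyMeasurable
      measurableSet_Ioi)
  have hGf_int : IntegrableOn (fun s => gfun β s * ig_f β c s) (Ioi 0) := by
    apply Integrable.mono' hf_int hmeas
    rw [ae_restrict_iff' measurableSet_Ioi]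
    apply ae_of_all
    intro s hs
    rw [Real.norm_eq_abs, abs_mul, abs_of_nonneg (ig_f_nonneg β c hc.le (mem_Ioi.1 hs))]
    calc |gfun β s| * ig_f β c s ≤ 1 * ig_f β c s :=
          mul_le_mul_of_nonneg_right (abs_gfun_le_one β s) (ig_f_nonneg β c hc.le (mem_Ioi.1 hs))
      _ = ig_f β c s := one_mul _
  -- RHS integrand
  have hRHS_int : IntegrableOn
      (fun s => (gfun β m - Dfun β m * m) * ig_f β c s + Dfun β m * (s * ig_f β c s))
      (Ioi 0) :=
    (hf_int.const_mul _).add (htf_int.const_mul _)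
  have hmono : ∫ s in Ioi (0:ℝ), gfun β s * ig_f β c s ≤
      ∫ s in Ioi (0:ℝ),
        ((gfun β m - Dfun β m * m) * ig_f β c s + Dfun β m * (s * ig_f β c s)) := by
    apply setIntegral_mono_on hGf_int hRHS_int measurableSet_Ioi
    intro s hs
    have hs' := mem_Ioi.1 hs
    have htan := tangent_line β hβ hm hs'
    have hfnn := ig_f_nonneg β c hc.le hs'
    calc gfun β s * ig_f β c s ≤ (gfun β m + Dfun β m * (s - m)) * ig_f β c s :=
          mul_le_mul_of_nonneg_right htan hfnn
      _ = (gfun β m - Dfun β m * m) * ig_f β c s + Dfun β m * (s * ig_f β c s) := by ring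
  have hval : ∫ s in Ioi (0:ℝ),
      ((gfun β m - Dfun β m * m) * ig_f β c s + Dfun β m * (s * ig_f β c s)) = gfun β m := by
    rw [integral_add (hf_int.const_mul _) (htf_int.const_mul _),
      integral_const_mul, integral_const_mul, hf_val, htf_val]
    rw [← hm_def]
    ring
  linarith [hmono, le_of_eq hval]

theorem stmt7 (a x b : ℝ) (hb : b ≠ 0) (h : (a - x) * b < 0) :
    ∫ s in Set.Ioi (0 : ℝ), (2 * gaussCdf (|b| * Real.sqrt s) - 1) * invGaussPdf a x b s
      ≤ 2 * gaussCdf (Real.sqrt (|b * (a - x)|)) - 1 := by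
  have hax : a - x ≠ 0 := by
    intro h0
    rw [h0, zero_mul] at h
    exact lt_irrefl 0 h
  set β : ℝ := |b| with hβdef
  set c : ℝ := |a - x| with hcdef
  have hβ : 0 < β := abs_pos.2 hb
  have hc : 0 < c := abs_pos.2 hax
  have hcongr : ∫ s in Set.Ioi (0 : ℝ),
      (2 * gaussCdf (|b| * Real.sqrt s) - 1) * invGaussPdf a x b s
      = ∫ s in Set.Ioi (0 : ℝ), gfun β s * ig_f β c s := by
    apply setIntegral_congr_fun measurableSet_Ioi
    intro s hs
    simp only []
    rw [invGaussPdf_eq_ig_f a x b hb h (mem_Ioi.1 hs)]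
    rfl
  rw [hcongr]
  have hmain := main_ineq β c hβ hc
  have hfin : gfun β (c / β) = 2 * gaussCdf (Real.sqrt (|b * (a - x)|)) - 1 := by
    unfold gfun
    have harg : β * Real.sqrt (c / β) = Real.sqrt (|b * (a - x)|) := by
      rw [abs_mul]
      rw [show |b| * |a - x| = β * c from rfl]
      rw [show β * Real.sqrt (c / β) = Real.sqrt (β ^ 2) * Real.sqrt (c / β) by
        rw [Real.sqrt_sq hβ.le]]
      rw [← Real.sqrt_mul (sq_nonneg β)]
      congr 1
      field_simp
    rw [harg]
  linarith [hmain, le_of_eq hfin]
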